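/- Let α be a real constant with α(α−3)(2α−3) ≠ 0, set m := (2α³−9α²+9α)^{1/3} (real cube root) and s := (3α²−9α+9)/m². Let u: I → ℝ be a smooth solution of the nonlinear ODE u‴ = α·(u″)²/u′ on an open interval I, with u′ > 0 and u″ ≠ 0 throughout I. Then x̄(x) := −(m/3)·ln u′(x) is strictly monotone on I, and the function v of x̄ defined by v(x̄(x)) = (u(x) − x·u′(x))·u′(x)^{α/3−1} is a smooth solution of the linear canonical equation v‴ = s·v′ + v (derivatives taken with respect to x̄). -/

import Mathlib

/-!
Invariants of the third-order ODE `u''' = f(x, u, u', u'')` under contact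
transformations, following Cartan's equivalence method.
We write `p = u'`, `q = u''`.
-/

noncomputable section

/-- The real cube root of a real number. -/
def cbrt (y : ℝ) : ℝ := if 0 ≤ y then y ^ ((1 : ℝ)/3) else -((-y) ^ ((1 : ℝ)/3))

/-- Functions of `(x, u, p, q)`. -/
abbrev Fn : Type := ℝ → ℝ → ℝ → ℝ → ℝ

/-- Functions of `(x, u, p)`. -/
abbrev Fn3 : Type := ℝ → ℝ → ℝ → ℝ

/-- Partial derivative in `x` of a function of `(x,u,p,q)`. -/
def pdx (g : Fn) : Fn := fun x u p q => deriv (fun t => g t u p q) x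
/-- Partial derivative in `u` of a function of `(x,u,p,q)`. -/
def pdu (g : Fn) : Fn := fun x u p q => deriv (fun t => g x t p q) u
/-- Partial derivative in `p` of a function of `(x,u,p,q)`. -/
def pdp (g : Fn) : Fn := fun x u p q => deriv (fun t => g x u t q) p
/-- Partial derivative in `q` of a function of `(x,u,p,q)`. -/
def pdq (g : Fn) : Fn := fun x u p q => deriv (fun t => g x u p t) q

/-- Partial derivative in `x` of a function of `(x,u,p)`. -/
def pdx3 (g : Fn3) : Fn3 := fun x u p => deriv (fun t => g t u p) x
/-- Partial derivative in `u` of a function of `(x,u,p)`. -/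
def pdu3 (g : Fn3) : Fn3 := fun x u p => deriv (fun t => g x t p) u
/-- Partial derivative in `p` of a function of `(x,u,p)`. -/
def pdp3 (g : Fn3) : Fn3 := fun x u p => deriv (fun t => g x u t) p

/-- Lift of a function of `(x,u,p)` to a function of `(x,u,p,q)`, constant in `q`. -/
def lift (g : Fn3) : Fn := fun x u p _ => g x u p

/-- The total derivative operator `D̂ₓ = ∂ₓ + p ∂ᵤ + q ∂ₚ + f ∂_q` of the ODE `u''' = f`. -/
def Dhat (f g : Fn) : Fn := fun x u p q =>
  pdx g x u p q + p * pdu g x u p q + q * pdp g x u p q + f x u p q * pdq g x u p q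

/-- `I₁ = −f_q`. -/
def I1 (f : Fn) : Fn := fun x u p q => -(pdq f x u p q)

/-- `I₂ = −(2/9)I₁² − f_p − (1/3)D̂ₓI₁`. -/
def I2 (f : Fn) : Fn := fun x u p q =>
  -(2/9) * (I1 f x u p q)^2 - pdp f x u p q - (1/3) * Dhat f (I1 f) x u p q

/-- `I₃ = −(1/3)I₁I₂ − f_u − (1/2)D̂ₓI₂`. -/
def I3 (f : Fn) : Fn := fun x u p q =>
  -(1/3) * I1 f x u p q * I2 f x u p q - pdu f x u p q - (1/2) * Dhat f (I2 f) x u p q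

/-- `J₃`, the real cube root of `I₃`. -/
def J3 (f : Fn) : Fn := fun x u p q => cbrt (I3 f x u p q)

/-- `I₄ = (J₃)_q`. -/
def I4 (f : Fn) : Fn := pdq (J3 f)

/-- `I₅ = (1/(3J₃²))(I₁J₃ + 3D̂ₓJ₃)`. -/
def I5 (f : Fn) : Fn := fun x u p q =>
  (1 / (3 * (J3 f x u p q)^2)) * (I1 f x u p q * J3 f x u p q + 3 * Dhat f (J3 f) x u p q)

/-- `I₇ = −(I₅)_q J₃²`. -/
def I7 (f : Fn) : Fn := fun x u p q => -(pdq (I5 f) x u p q) * (J3 f x u p q)^2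

/-- `I₉ = 2J₃D̂ₓI₅ − I₂ + J₃²I₅²`. -/
def I9 (f : Fn) : Fn := fun x u p q =>
  2 * J3 f x u p q * Dhat f (I5 f) x u p q - I2 f x u p q
    + (J3 f x u p q)^2 * (I5 f x u p q)^2

/-- `K = I₉/J₃²`. -/
def Kinv (f : Fn) : Fn := fun x u p q => I9 f x u p q / (J3 f x u p q)^2

/-- `Q = −(I₁I₇ + 3J₃²(I₅)_p + 3(J₃)_u − 3J₃I₄D̂ₓI₅)/(3J₃)`. -/
def Qinv (f : Fn) : Fn := fun x u p q =>
  -(I1 f x u p q * I7 f x u p q + 3 * (J3 f x u p q)^2 * pdp (I5 f) x u p q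
      + 3 * pdu (J3 f) x u p q
      - 3 * J3 f x u p q * I4 f x u p q * Dhat f (I5 f) x u p q)
    / (3 * J3 f x u p q)

/-- `I₆ = (2/3)(J₃)_q I₁ − (1/3)(I₁)_q J₃ − 2(J₃)_p + 2J₃I₄I₅`. -/
def I6 (f : Fn) : Fn := fun x u p q =>
  (2/3) * pdq (J3 f) x u p q * I1 f x u p q - (1/3) * pdq (I1 f) x u p q * J3 f x u p q
    - 2 * pdp (J3 f) x u p q + 2 * J3 f x u p q * I4 f x u p q * I5 f x u p q

/-- `I₈ = (I₄)_q`. -/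
def I8 (f : Fn) : Fn := pdq (I4 f)

/-- `I₁₀ = I₄D̂ₓI₇ − J₃(I₇)_p + J₃²(I₄/J₃)_u`. -/
def I10 (f : Fn) : Fn := fun x u p q =>
  I4 f x u p q * Dhat f (I7 f) x u p q - J3 f x u p q * pdp (I7 f) x u p q
    + (J3 f x u p q)^2 *
      pdu (fun x' u' p' q' => I4 f x' u' p' q' / J3 f x' u' p' q') x u p q

/-- `I₁₁ = (J₃)_u − D̂ₓI₇`. -/
def I11 (f : Fn) : Fn := fun x u p q =>
  pdu (J3 f) x u p q - Dhat f (I7 f) x u p q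

/-- `I₁₂`. -/
def I12 (f : Fn) : Fn := fun x u p q =>
  6 * I1 f x u p q * J3 f x u p q *
      (I5 f x u p q * I7 f x u p q - I4 f x u p q * Dhat f (I5 f) x u p q)
    - 18 * (J3 f x u p q)^3 * I4 f x u p q
    + 6 * pdp (I5 f) x u p q * I1 f x u p q * (J3 f x u p q)^2
    - 18 * I2 f x u p q * J3 f x u p q * I4 f x u p q * I5 f x u p q
    - 18 * J3 f x u p q * I7 f x u p q * Dhat f (I5 f) x u p q
    + 18 * (J3 f x u p q)^2 * pdu (I5 f) x u p q
    + 18 * I2 f x u p q * Dhat f (I4 f) x u p q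
    + 2 * (I1 f x u p q)^2 * I7 f x u p q
    - 9 * pdp (I2 f) x u p q * J3 f x u p q
    + 6 * (J3 f x u p q)^2 *
        pdu (fun x' u' p' q' => I1 f x' u' p' q' / J3 f x' u' p' q') x u p q
    + 36 * I2 f x u p q * I7 f x u p q

/-- `I₁₃ = (J₃I₄I₅ − I₇)D̂ₓK + J₃K_u − J₃²I₅K_p`. -/
def I13 (f : Fn) : Fn := fun x u p q =>
  (J3 f x u p q * I4 f x u p q * I5 f x u p q - I7 f x u p q) * Dhat f (Kinv f) x u p q
    + J3 f x u p q * pdu (Kinv f) x u p q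
    - (J3 f x u p q)^2 * I5 f x u p q * pdp (Kinv f) x u p q

/-- `I₁₄ = K_q`. -/
def I14 (f : Fn) : Fn := pdq (Kinv f)

/-- `I₁₅ = I₄D̂ₓK − J₃K_p`. -/
def I15 (f : Fn) : Fn := fun x u p q =>
  I4 f x u p q * Dhat f (Kinv f) x u p q - J3 f x u p q * pdp (Kinv f) x u p q

/-- The Jacobian determinant of the map `(x,u,p) ↦ (φ, ψ, χ)`. -/
def jac3 (φ ψ χ : Fn3) : Fn3 := fun x u p =>
  Matrix.det !![pdx3 φ x u p, pdu3 φ x u p, pdp3 φ x u p;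
                pdx3 ψ x u p, pdu3 ψ x u p, pdp3 ψ x u p;
                pdx3 χ x u p, pdu3 χ x u p, pdp3 χ x u p]

/-- A contact transformation `(x̄,ū,p̄) = (φ(x,u,p), ψ(x,u,p), χ(x,u,p))` on an open set
`U ⊆ ℝ³`: a smooth map with nowhere-vanishing Jacobian determinant, together with a
nowhere-vanishing contact multiplier `lam` such that `dψ − χ dφ = lam (du − p dx)`. -/
structure IsContactTransformOn (U : Set (ℝ × ℝ × ℝ)) (φ ψ χ lam : Fn3) : Prop where
  isOpen : IsOpen U
  smooth : ContDiffOn ℝ (⊤ : ℕ∞) (fun v : ℝ × ℝ × ℝ =>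
      (φ v.1 v.2.1 v.2.2, ψ v.1 v.2.1 v.2.2, χ v.1 v.2.1 v.2.2)) U
  jac_ne : ∀ x u p, (x, u, p) ∈ U → jac3 φ ψ χ x u p ≠ 0
  lam_ne : ∀ x u p, (x, u, p) ∈ U → lam x u p ≠ 0
  contact_p : ∀ x u p, (x, u, p) ∈ U → pdp3 ψ x u p - χ x u p * pdp3 φ x u p = 0
  contact_u : ∀ x u p, (x, u, p) ∈ U → pdu3 ψ x u p - χ x u p * pdu3 φ x u p = lam x u p
  contact_x : ∀ x u p, (x, u, p) ∈ U → pdx3 ψ x u p - χ x u p * pdx3 φ x u p = -p * lam x u p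

/-- `u` is a smooth solution of the third-order ODE `u''' = f(x,u,u',u'')` on `I`. -/
def SolvesODE3 (f : Fn) (I : Set ℝ) (u : ℝ → ℝ) : Prop :=
  ContDiffOn ℝ (⊤ : ℕ∞) u I ∧
  ∀ x ∈ I, deriv (deriv (deriv u)) x = f x (u x) (deriv u x) (deriv (deriv u) x)

/-- The ODE `u''' = f(x,u,u',u'')` is equivalent to `ū''' = f̄(x̄,ū,ū',ū'')` under the
contact transformation `(φ, ψ, χ)` on `U`: for every smooth solution `u` of the first
equation, defined on an open interval, whose prolonged graph `(x, u(x), u'(x))` lies in `U`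
and for which `x̄(x) := φ(x,u(x),u'(x))` has nonvanishing derivative, the function `v` of
`x̄` defined by `v(x̄(x)) = ψ(x,u(x),u'(x))` is a smooth solution of the second equation
and satisfies `dv/dx̄ = χ(x,u(x),u'(x))`. -/
def ContactEquivOn (f fbar : Fn) (U : Set (ℝ × ℝ × ℝ)) (φ ψ χ : Fn3) : Prop :=
  ∀ (I : Set ℝ) (u : ℝ → ℝ), IsOpen I → I.OrdConnected →
    SolvesODE3 f I u →
    (∀ x ∈ I, (x, u x, deriv u x) ∈ U) →
    (∀ x ∈ I, deriv (fun t => φ t (u t) (deriv u t)) x ≠ 0) →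
    ∃ v : ℝ → ℝ,
      ContDiffOn ℝ (⊤ : ℕ∞) v ((fun t => φ t (u t) (deriv u t)) '' I) ∧
      (∀ x ∈ I, v (φ x (u x) (deriv u x)) = ψ x (u x) (deriv u x)) ∧
      (∀ x ∈ I, deriv v (φ x (u x) (deriv u x)) = χ x (u x) (deriv u x)) ∧
      (∀ y ∈ (fun t => φ t (u t) (deriv u t)) '' I,
        deriv (deriv (deriv v)) y = fbar y (v y) (deriv v y) (deriv (deriv v) y))

open Real in
lemma cbrt_cube (y : ℝ) : (cbrt y)^3 = y := by
  unfold cbrt; split_ifs with h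
  · rw [← Real.rpow_natCast (y ^ ((1:ℝ)/3)) 3, ← Real.rpow_mul h]; norm_num
  · push_neg at h
    have h' : (0:ℝ) ≤ -y := by linarith
    rw [Odd.neg_pow (by decide : Odd 3), ← Real.rpow_natCast ((-y) ^ ((1:ℝ)/3)) 3,
      ← Real.rpow_mul h']
    norm_num

lemma constOn {I : Set ℝ} (hIo : IsOpen I) (hIc : Convex ℝ I) {g : ℝ → ℝ}
    (h : ∀ x ∈ I, HasDerivAt g 0 x) : ∀ x ∈ I, ∀ y ∈ I, g x = g y := by
  intro x hx y hy
  apply hIc.is_const_of_fderivWithin_eq_zero (𝕜 := ℝ)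
    (fun z hz => (h z hz).differentiableAt.differentiableWithinAt) _ hx hy
  intro z hz
  rw [fderivWithin_of_isOpen hIo hz, (h z hz).hasFDerivAt.fderiv]; ext; simp

def V (A1 B1 A2 B2 A3 B3 k1 k2 k3 : ℝ) : ℝ → ℝ := fun y =>
  (A1 + B1*y) * Real.exp (k1*y) + (A2 + B2*y) * Real.exp (k2*y) + (A3 + B3*y) * Real.exp (k3*y)

lemma block_hasDerivAt (A B k : ℝ) (y : ℝ) :
    HasDerivAt (fun y => (A + B*y) * Real.exp (k*y)) ((A*k + B + B*k*y) * Real.exp (k*y)) y := by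
  have h1 : HasDerivAt (fun y : ℝ => A + B*y) B y := by
    simpa using ((hasDerivAt_id y).const_mul B).const_add A
  have h2 : HasDerivAt (fun y : ℝ => Real.exp (k*y)) (Real.exp (k*y) * k) y := by
    exact ((Real.hasDerivAt_exp (k*y)).comp y ((hasDerivAt_id y).const_mul k)).congr_deriv (by ring)
  have := h1.mul h2
  refine this.congr_deriv (Eq.symm ?_); ring

lemma V_hasDerivAt (A1 B1 A2 B2 A3 B3 k1 k2 k3 : ℝ) (y : ℝ) :
    HasDerivAt (V A1 B1 A2 B2 A3 B3 k1 k2 k3)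
      (V (A1*k1+B1) (B1*k1) (A2*k2+B2) (B2*k2) (A3*k3+B3) (B3*k3) k1 k2 k3 y) y := by
  have h := ((block_hasDerivAt A1 B1 k1 y).add (block_hasDerivAt A2 B2 k2 y)).add
    (block_hasDerivAt A3 B3 k3 y)
  have e : V (A1*k1+B1) (B1*k1) (A2*k2+B2) (B2*k2) (A3*k3+B3) (B3*k3) k1 k2 k3 y
      = (A1*k1 + B1 + B1*k1*y) * Real.exp (k1*y) + (A2*k2 + B2 + B2*k2*y) * Real.exp (k2*y)
        + (A3*k3 + B3 + B3*k3*y) * Real.exp (k3*y) := by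
    simp only [V]; try ring
  rw [e]; exact h

lemma V_deriv (A1 B1 A2 B2 A3 B3 k1 k2 k3 : ℝ) :
    deriv (V A1 B1 A2 B2 A3 B3 k1 k2 k3)
      = V (A1*k1+B1) (B1*k1) (A2*k2+B2) (B2*k2) (A3*k3+B3) (B3*k3) k1 k2 k3 := by
  funext y; exact (V_hasDerivAt A1 B1 A2 B2 A3 B3 k1 k2 k3 y).deriv

lemma V_contDiff (A1 B1 A2 B2 A3 B3 k1 k2 k3 : ℝ) :
    ContDiff ℝ (⊤ : ℕ∞) (V A1 B1 A2 B2 A3 B3 k1 k2 k3) := by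
  unfold V
  have hb : ∀ A B k : ℝ, ContDiff ℝ (⊤ : ℕ∞) (fun y : ℝ => (A + B*y) * Real.exp (k*y)) :=
    fun A B k => ((contDiff_const.add (contDiff_const.mul contDiff_id)).mul
      (Real.contDiff_exp.comp (contDiff_const.mul contDiff_id)))
  exact ((hb A1 B1 k1).add (hb A2 B2 k2)).add (hb A3 B3 k3)

lemma V_ode (A1 B1 A2 B2 A3 B3 k1 k2 k3 s : ℝ)
    (h1 : k1^3 = s*k1 + 1) (h2 : k2^3 = s*k2 + 1) (h3 : k3^3 = s*k3 + 1)
    (hB1 : B1 * (3*k1^2 - s) = 0) (hB2 : B2 * (3*k2^2 - s) = 0) (hB3 : B3 * (3*k3^2 - s) = 0) :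
    ∀ y, deriv (deriv (deriv (V A1 B1 A2 B2 A3 B3 k1 k2 k3))) y
      = s * deriv (V A1 B1 A2 B2 A3 B3 k1 k2 k3) y + V A1 B1 A2 B2 A3 B3 k1 k2 k3 y := by
  intro y
  rw [V_deriv, V_deriv, V_deriv]
  simp only [V]
  linear_combination (Real.exp (k1*y)) * ((A1 + B1*y) * h1 + hB1)
    + (Real.exp (k2*y)) * ((A2 + B2*y) * h2 + hB2)
    + (Real.exp (k3*y)) * ((A3 + B3*y) * h3 + hB3)

lemma root_aux (α m s t : ℝ) (hm0 : m ≠ 0) (hm3 : m^3 = 2*α^3 - 9*α^2 + 9*α)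
    (hs : s = (3*α^2 - 9*α + 9) / m^2)
    (ht : t^3 - (3*α^2-9*α+9)*t - (2*α^3-9*α^2+9*α) = 0) :
    (t/m)^3 = s*(t/m) + 1 := by
  have key : (t/m)^3 - (s*(t/m)+1) = (t^3 - (3*α^2-9*α+9)*t - m^3)/m^3 := by
    rw [hs]; field_simp; try ring
  have h2 : t^3 - (3*α^2-9*α+9)*t - m^3 = 0 := by rw [hm3]; linarith
  rw [h2, zero_div] at key
  linarith

/-- Let `α(α−3)(2α−3) ≠ 0`, `m` the real cube root of `2α³−9α²+9α`,
`s = (3α²−9α+9)/m²`.  If `u` is a smooth solution of `u''' = α(u'')²/u'` on an open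
interval `I` with `u' > 0` and `u'' ≠ 0` on `I`, then `x̄(x) := −(m/3)ln u'(x)` is
strictly monotone on `I` and the function `v` of `x̄` defined by
`v(x̄(x)) = (u − x·u')·(u')^{α/3−1}` is a smooth solution of `v''' = s·v' + v`. -/
theorem example1_linearizes (α m s : ℝ)
    (hα : α * (α - 3) * (2*α - 3) ≠ 0)
    (hm : m = cbrt (2*α^3 - 9*α^2 + 9*α))
    (hs : s = (3*α^2 - 9*α + 9) / m^2)
    (I : Set ℝ) (hIopen : IsOpen I) (hIconn : I.OrdConnected)
    (u : ℝ → ℝ)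
    (hu : SolvesODE3 (fun _ _ p q => α * q^2 / p) I u)
    (hp : ∀ x ∈ I, 0 < deriv u x)
    (hq : ∀ x ∈ I, deriv (deriv u) x ≠ 0)
    (xbar : ℝ → ℝ) (hxbar : xbar = fun x => -(m/3) * Real.log (deriv u x)) :
    (StrictMonoOn xbar I ∨ StrictAntiOn xbar I) ∧
    ∃ v : ℝ → ℝ,
      ContDiffOn ℝ (⊤ : ℕ∞) v (xbar '' I) ∧
      (∀ x ∈ I, v (xbar x) = (u x - x * deriv u x) * (deriv u x) ^ (α/3 - 1)) ∧
      (∀ y ∈ xbar '' I,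
        deriv (deriv (deriv v)) y = s * deriv v y + v y) := by
  obtain ⟨husm, hode⟩ := hu
  have hIc : Convex ℝ I := hIconn.convex
  have hm3 : m^3 = 2*α^3 - 9*α^2 + 9*α := by rw [hm]; exact cbrt_cube _
  have hm0 : m ≠ 0 := by
    intro h0
    rw [h0] at hm3
    exact hα (by nlinarith)
  have hpc : ContDiffOn ℝ (⊤:ℕ∞) (deriv u) I := husm.deriv_of_isOpen hIopen (by simp)
  have hqc : ContDiffOn ℝ (⊤:ℕ∞) (deriv (deriv u)) I := hpc.deriv_of_isOpen hIopen (by simp)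
  have hud : ∀ x ∈ I, HasDerivAt u (deriv u x) x := fun x hx =>
    ((husm.differentiableOn (by simp)).differentiableAt (hIopen.mem_nhds hx)).hasDerivAt
  have hpd : ∀ x ∈ I, HasDerivAt (deriv u) (deriv (deriv u) x) x := fun x hx =>
    ((hpc.differentiableOn (by simp)).differentiableAt (hIopen.mem_nhds hx)).hasDerivAt
  have hqd : ∀ x ∈ I, HasDerivAt (deriv (deriv u))
      (α * (deriv (deriv u) x)^2 / deriv u x) x := by
    intro x hx
    have h := ((hqc.differentiableOn (by simp)).differentiableAt (hIopen.mem_nhds hx)).hasDerivAt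
    rwa [hode x hx] at h
  have hpne : ∀ x ∈ I, deriv u x ≠ 0 := fun x hx => ne_of_gt (hp x hx)
  have hxd : ∀ x ∈ I, HasDerivAt xbar (-(m/3) * (deriv (deriv u) x / deriv u x)) x := by
    intro x hx
    rw [hxbar]
    exact ((hpd x hx).log (hpne x hx)).const_mul (-(m/3))
  constructor
  · -- strict monotonicity
    have hxc : ContinuousOn xbar I := fun x hx => (hxd x hx).continuousAt.continuousWithinAt
    have key : ∀ x ∈ I, deriv xbar x = -(m/3) * (deriv (deriv u) x / deriv u x) :=
      fun x hx => (hxd x hx).deriv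
    have hqsign : (∀ x ∈ I, 0 < deriv (deriv u) x) ∨ (∀ x ∈ I, deriv (deriv u) x < 0) := by
      by_contra hcon
      push_neg at hcon
      obtain ⟨⟨x1, hx1, h1⟩, x2, hx2, h2⟩ := hcon
      have h1' : deriv (deriv u) x1 < 0 := lt_of_le_of_ne h1 (hq x1 hx1)
      have h2' : 0 < deriv (deriv u) x2 := lt_of_le_of_ne h2 (Ne.symm (hq x2 hx2))
      have hsub : Set.uIcc x1 x2 ⊆ I := hIconn.uIcc_subset hx1 hx2
      have hcont : ContinuousOn (deriv (deriv u)) (Set.uIcc x1 x2) := hqc.continuousOn.mono hsub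
      have h0 : (0:ℝ) ∈ Set.uIcc (deriv (deriv u) x1) (deriv (deriv u) x2) :=
        Set.mem_uIcc.mpr (Or.inl ⟨le_of_lt h1', le_of_lt h2'⟩)
      obtain ⟨z, hz, hz0⟩ := intermediate_value_uIcc hcont h0
      exact hq z (hsub hz) hz0
    rcases hqsign with hqs | hqs <;> rcases hm0.lt_or_gt with hm' | hm'
    · left
      apply strictMonoOn_of_deriv_pos hIc hxc
      intro x hx; rw [hIopen.interior_eq] at hx; rw [key x hx]
      have h1 := div_pos (hqs x hx) (hp x hx); nlinarith
    · right
      apply strictAntiOn_of_deriv_neg hIc hxc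
      intro x hx; rw [hIopen.interior_eq] at hx; rw [key x hx]
      have h1 := div_pos (hqs x hx) (hp x hx); nlinarith
    · right
      apply strictAntiOn_of_deriv_neg hIc hxc
      intro x hx; rw [hIopen.interior_eq] at hx; rw [key x hx]
      have h1 := div_neg_of_neg_of_pos (hqs x hx) (hp x hx); nlinarith
    · left
      apply strictMonoOn_of_deriv_pos hIc hxc
      intro x hx; rw [hIopen.interior_eq] at hx; rw [key x hx]
      have h1 := div_neg_of_neg_of_pos (hqs x hx) (hp x hx); nlinarith
  · -- existence of v
    rcases Set.eq_empty_or_nonempty I with hIe | ⟨x₀, hx₀⟩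
    · exact ⟨fun _ => 0, contDiffOn_const, by simp [hIe], by simp [hIe]⟩
    suffices hV : ∃ v : ℝ → ℝ, ContDiff ℝ (⊤:ℕ∞) v ∧
        (∀ x ∈ I, v (xbar x) = (u x - x * deriv u x) * (deriv u x) ^ (α/3 - 1)) ∧
        (∀ y : ℝ, deriv (deriv (deriv v)) y = s * deriv v y + v y) by
      obtain ⟨v, h1, h2, h3⟩ := hV
      exact ⟨v, h1.contDiffOn, h2, fun y _ => h3 y⟩
    -- the constant C with q = C p^α
    have hC0 : ∀ x ∈ I, HasDerivAt (fun t => deriv (deriv u) t * (deriv u t) ^ (-α)) 0 x := by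
      intro x hx
      have h := (hqd x hx).mul ((hpd x hx).rpow_const (p := -α) (Or.inl (hpne x hx)))
      refine h.congr_deriv (Eq.symm ?_)
      have e : deriv u x ^ (-α - 1) = deriv u x ^ (-α) / deriv u x := by
        rw [Real.rpow_sub (hp x hx), Real.rpow_one]
      rw [e]
      field_simp
      ring
    have hCeq := constOn hIopen hIc hC0
    set C := deriv (deriv u) x₀ * deriv u x₀ ^ (-α) with hCdef
    have hqpC : ∀ x ∈ I, deriv (deriv u) x * deriv u x ^ (-α) = C := by
      intro x hx
      exact hCeq x hx x₀ hx₀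
    have hCq : ∀ x ∈ I, deriv (deriv u) x = C * deriv u x ^ α := by
      intro x hx
      have h := hqpC x hx
      have e : deriv u x ^ (-α) * deriv u x ^ α = 1 := by
        rw [← Real.rpow_add (hp x hx)]; simp
      calc deriv (deriv u) x = deriv (deriv u) x * (deriv u x ^ (-α) * deriv u x ^ α) := by
            rw [e, mul_one]
        _ = (deriv (deriv u) x * deriv u x ^ (-α)) * deriv u x ^ α := by ring
        _ = C * deriv u x ^ α := by rw [h]
    have hCne : C ≠ 0 :=
      mul_ne_zero (hq x₀ hx₀) (ne_of_gt (Real.rpow_pos_of_pos (hp x₀ hx₀) _))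
    have hexp : ∀ (k : ℝ), ∀ x ∈ I, Real.exp (k * xbar x) = deriv u x ^ (-(m*k)/3) := by
      intro k x hx
      rw [hxbar, Real.rpow_def_of_pos (hp x hx)]
      congr 1
      ring
    have hxx : ∀ x, xbar x = -(m/3) * Real.log (deriv u x) := by
      intro x; rw [hxbar]
    have hk1 : ((3-α)/m)^3 = s*((3-α)/m) + 1 := root_aux α m s _ hm0 hm3 hs (by ring)
    have hk2 : ((-α)/m)^3 = s*((-α)/m) + 1 := root_aux α m s _ hm0 hm3 hs (by ring)
    have hk3 : ((2*α-3)/m)^3 = s*((2*α-3)/m) + 1 := root_aux α m s _ hm0 hm3 hs (by ring)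
    by_cases hα1 : α = 1
    · subst hα1
      set c := 3/(m*C) with hcdef
      have hg1d : ∀ x ∈ I, HasDerivAt (fun t => t - (m/3)*c*(Real.log (deriv u t) + 1)) 0 x := by
        intro x hx
        have h := (hasDerivAt_id x).sub
          ((((hpd x hx).log (hpne x hx)).add_const 1).const_mul ((m/3)*c))
        refine h.congr_deriv (Eq.symm ?_)
        have h' : deriv (deriv u) x = C * deriv u x := by
          have h2 := hCq x hx; rwa [Real.rpow_one] at h2
        rw [h', hcdef]
        field_simp [hpne x hx, hCne, hm0]; ring
      have hg1 := constOn hIopen hIc hg1d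
      set b := -(x₀ - (m/3)*c*(Real.log (deriv u x₀) + 1)) with hbdef
      have hx' : ∀ x ∈ I, x - (m/3)*c*(Real.log (deriv u x) + 1) = -b := by
        intro x hx
        have h : x - (m/3)*c*(Real.log (deriv u x) + 1)
            = x₀ - (m/3)*c*(Real.log (deriv u x₀) + 1) := hg1 x hx x₀ hx₀
        rw [hbdef, neg_neg]; exact h
      have hg2d : ∀ x ∈ I, HasDerivAt
          (fun t => u t - t*deriv u t - b*deriv u t
            + c*(m/3)*(deriv u t * Real.log (deriv u t))) 0 x := by
        intro x hx
        have h := (((hud x hx).sub ((hasDerivAt_id x).mul (hpd x hx))).sub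
          ((hpd x hx).const_mul b)).add
          (((hpd x hx).mul ((hpd x hx).log (hpne x hx))).const_mul (c*(m/3)))
        refine h.congr_deriv (Eq.symm ?_)
        have e : deriv u x * (deriv (deriv u) x / deriv u x) = deriv (deriv u) x := by
          field_simp
          try exact mul_div_cancel_left₀ _ (hpne x hx)
        rw [e]
        simp only [id_eq]
        linear_combination (deriv (deriv u) x) * (hx' x hx)
      have hg2 := constOn hIopen hIc hg2d
      set a := u x₀ - x₀*deriv u x₀ - b*deriv u x₀
          + c*(m/3)*(deriv u x₀ * Real.log (deriv u x₀)) with hadef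
      have hmatch : ∀ x ∈ I, u x - x*deriv u x
          = a + b*deriv u x - c*(m/3)*(deriv u x * Real.log (deriv u x)) := by
        intro x hx
        have h : u x - x*deriv u x - b*deriv u x + c*(m/3)*(deriv u x * Real.log (deriv u x))
            = u x₀ - x₀*deriv u x₀ - b*deriv u x₀
              + c*(m/3)*(deriv u x₀ * Real.log (deriv u x₀)) := hg2 x hx x₀ hx₀
        rw [hadef]; linarith
      have hB2 : c*(3*((-1:ℝ)/m)^2 - s) = 0 := by
        have h0 : 3*((-1:ℝ)/m)^2 - s = 0 := by rw [hs]; field_simp; try ring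
        rw [h0, mul_zero]
      refine ⟨V a 0 b c 0 0 ((3-1)/m) ((-1)/m) ((2*1-3)/m), V_contDiff _ _ _ _ _ _ _ _ _, ?_,
        V_ode _ _ _ _ _ _ _ _ _ _ hk1 hk2 hk3 (by ring) hB2 (by ring)⟩
      intro x hx
      simp only [V]
      rw [hexp ((3-1)/m) x hx, hexp ((-1)/m) x hx]
      rw [show -(m*((3-1)/m))/3 = 1/3-1 by field_simp; try ring,
          show -(m*((-1)/m))/3 = 1+(1/3-1) by field_simp; try ring]
      rw [Real.rpow_add (hp x hx), Real.rpow_one]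
      rw [hmatch x hx, hxx x]
      ring
    by_cases hα2 : α = 2
    · subst hα2
      set c := -3/(m*C) with hcdef
      have hc1 : c*(m/3)*C = -1 := by rw [hcdef]; field_simp
      have hg1d : ∀ x ∈ I, HasDerivAt (fun t => t - c*(m/3)*(deriv u t)^(-1:ℝ)) 0 x := by
        intro x hx
        have h := (hasDerivAt_id x).sub
          (((hpd x hx).rpow_const (p := (-1:ℝ)) (Or.inl (hpne x hx))).const_mul (c*(m/3)))
        refine h.congr_deriv (Eq.symm ?_)
        rw [hCq x hx]
        have e : deriv u x ^ (2:ℝ) * deriv u x ^ (-1-1:ℝ) = 1 := by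
          rw [← Real.rpow_add (hp x hx)]; norm_num
        linear_combination (-(c*(m/3)*C))*e - hc1
      have hg1 := constOn hIopen hIc hg1d
      set b := -(x₀ - c*(m/3)*(deriv u x₀)^(-1:ℝ)) with hbdef
      have hx' : ∀ x ∈ I, x - c*(m/3)*(deriv u x)^(-1:ℝ) = -b := by
        intro x hx
        have h : x - c*(m/3)*(deriv u x)^(-1:ℝ)
            = x₀ - c*(m/3)*(deriv u x₀)^(-1:ℝ) := hg1 x hx x₀ hx₀
        rw [hbdef, neg_neg]; exact h
      have hg2d : ∀ x ∈ I, HasDerivAt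
          (fun t => u t - t*deriv u t - b*deriv u t + c*(m/3)*Real.log (deriv u t)) 0 x := by
        intro x hx
        have h := (((hud x hx).sub ((hasDerivAt_id x).mul (hpd x hx))).sub
          ((hpd x hx).const_mul b)).add (((hpd x hx).log (hpne x hx)).const_mul (c*(m/3)))
        refine h.congr_deriv (Eq.symm ?_)
        simp only [id_eq]
        have h' := hx' x hx
        rw [Real.rpow_neg_one] at h'
        linear_combination (deriv (deriv u) x) * h'
      have hg2 := constOn hIopen hIc hg2d
      set a := u x₀ - x₀*deriv u x₀ - b*deriv u x₀ + c*(m/3)*Real.log (deriv u x₀) with hadef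
      have hmatch : ∀ x ∈ I, u x - x*deriv u x
          = a + b*deriv u x - c*(m/3)*Real.log (deriv u x) := by
        intro x hx
        have h : u x - x*deriv u x - b*deriv u x + c*(m/3)*Real.log (deriv u x)
            = u x₀ - x₀*deriv u x₀ - b*deriv u x₀ + c*(m/3)*Real.log (deriv u x₀) :=
          hg2 x hx x₀ hx₀
        rw [hadef]; linarith
      have hB1 : c*(3*((3-2:ℝ)/m)^2 - s) = 0 := by
        have h0 : 3*((3-2:ℝ)/m)^2 - s = 0 := by rw [hs]; field_simp; try ring
        rw [h0, mul_zero]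
      refine ⟨V a c b 0 0 0 ((3-2)/m) ((-2)/m) ((2*2-3)/m), V_contDiff _ _ _ _ _ _ _ _ _, ?_,
        V_ode _ _ _ _ _ _ _ _ _ _ hk1 hk2 hk3 hB1 (by ring) (by ring)⟩
      intro x hx
      simp only [V]
      rw [hexp ((3-2)/m) x hx, hexp ((-2)/m) x hx]
      rw [show -(m*((3-2)/m))/3 = 2/3-1 by field_simp; try ring,
          show -(m*((-2)/m))/3 = 1+(2/3-1) by field_simp; try ring]
      rw [Real.rpow_add (hp x hx), Real.rpow_one]
      rw [hmatch x hx, hxx x]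
      ring
    -- generic case
    have h1α : (1:ℝ) - α ≠ 0 := fun h => hα1 (by linarith)
    have h2α : (2:ℝ) - α ≠ 0 := fun h => hα2 (by linarith)
    set c := -1/(C*(1-α)*(2-α)) with hcdef
    have hc1 : c*(2-α)*(1-α)*C = -1 := by rw [hcdef]; field_simp
    have hg1d : ∀ x ∈ I, HasDerivAt (fun t => t + c*(2-α)*(deriv u t)^(1-α)) 0 x := by
      intro x hx
      have h := (hasDerivAt_id x).add
        (((hpd x hx).rpow_const (p := 1-α) (Or.inl (hpne x hx))).const_mul (c*(2-α)))
      refine h.congr_deriv (Eq.symm ?_)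
      rw [show (1-α-1 : ℝ) = -α by ring]
      linear_combination (-(c*(2-α)*(1-α))) * (hqpC x hx) - hc1
    have hg1 := constOn hIopen hIc hg1d
    set b := -(x₀ + c*(2-α)*(deriv u x₀)^(1-α)) with hbdef
    have hx' : ∀ x ∈ I, x + c*(2-α)*(deriv u x)^(1-α) = -b := by
      intro x hx
      have h : x + c*(2-α)*(deriv u x)^(1-α) = x₀ + c*(2-α)*(deriv u x₀)^(1-α) :=
        hg1 x hx x₀ hx₀
      rw [hbdef, neg_neg]; exact h
    have hg2d : ∀ x ∈ I, HasDerivAt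
        (fun t => u t - t*deriv u t - b*deriv u t - c*(deriv u t)^(2-α)) 0 x := by
      intro x hx
      have h := (((hud x hx).sub ((hasDerivAt_id x).mul (hpd x hx))).sub
        ((hpd x hx).const_mul b)).sub
        (((hpd x hx).rpow_const (p := 2-α) (Or.inl (hpne x hx))).const_mul c)
      refine h.congr_deriv (Eq.symm ?_)
      rw [show (2-α-1 : ℝ) = 1-α by ring]
      simp only [id_eq]
      linear_combination (deriv (deriv u) x) * (hx' x hx)
    have hg2 := constOn hIopen hIc hg2d
    set a := u x₀ - x₀*deriv u x₀ - b*deriv u x₀ - c*(deriv u x₀)^(2-α) with hadef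
    have hmatch : ∀ x ∈ I, u x - x*deriv u x = a + b*deriv u x + c*(deriv u x)^(2-α) := by
      intro x hx
      have h : u x - x*deriv u x - b*deriv u x - c*(deriv u x)^(2-α)
          = u x₀ - x₀*deriv u x₀ - b*deriv u x₀ - c*(deriv u x₀)^(2-α) := hg2 x hx x₀ hx₀
      rw [hadef]; linarith
    refine ⟨V a 0 b 0 c 0 ((3-α)/m) ((-α)/m) ((2*α-3)/m), V_contDiff _ _ _ _ _ _ _ _ _, ?_,
      V_ode _ _ _ _ _ _ _ _ _ _ hk1 hk2 hk3 (by ring) (by ring) (by ring)⟩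
    intro x hx
    simp only [V]
    rw [hexp ((3-α)/m) x hx, hexp ((-α)/m) x hx, hexp ((2*α-3)/m) x hx]
    rw [show -(m*((3-α)/m))/3 = α/3-1 by field_simp; try ring,
        show -(m*((-α)/m))/3 = 1+(α/3-1) by field_simp; try ring,
        show -(m*((2*α-3)/m))/3 = (2-α)+(α/3-1) by field_simp; try ring]
    rw [Real.rpow_add (hp x hx), Real.rpow_one, Real.rpow_add (hp x hx)]
    rw [hmatch x hx]
    ring


end
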